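/- Splitting of the uniform output bound: Let γ₂ be of class K, ρ₁, ρ₂, ρ₃ of class K∞, and b₁, b₂, v₁, v₂, d₁, d₂, d₃ ≥ 0. Then (Id + ρ₂⁻¹)(b₂ + d₃ + γ₂((Id + ρ₁⁻¹)(b₁ + v₁ + d₁)) + v₂ + d₂) ≤ (Id + ρ₂⁻¹)((Id + ρ₃⁻¹)(b₂ + γ₂((Id + ρ₁⁻¹)((Id + ρ₃⁻¹)(b₁))))) + (Id + ρ₂⁻¹)((Id + ρ₃)(d₃ + γ₂((Id + ρ₁⁻¹)((Id + ρ₃)(v₁ + d₁))) + v₂ + d₂)). In other words, the Step-1 bound splits into a term δ₂(·) depending only on the initial-condition constants b₁, b₂ and a term Δ₂ depending only on the input constants v₁, v₂, d₁, d₂, d₃. -/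

import Mathlib

open scoped NNReal

/-- A function `γ : ℝ≥0 → ℝ≥0` is of class K if it is continuous, strictly
increasing, and `γ 0 = 0`. -/
def ClassK (γ : ℝ≥0 → ℝ≥0) : Prop := Continuous γ ∧ StrictMono γ ∧ γ 0 = 0

/-- A function `ρ : ℝ≥0 → ℝ≥0` is of class K∞ if it is of class K and unbounded. -/
def ClassKInf (ρ : ℝ≥0 → ℝ≥0) : Prop :=
  ClassK ρ ∧ Filter.Tendsto ρ Filter.atTop Filter.atTop

/-- `Ip ρ` is the pointwise sum `Id + ρ`. -/
def Ip (ρ : ℝ≥0 → ℝ≥0) : ℝ≥0 → ℝ≥0 := fun s => s + ρ s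

lemma Ip_mono {ρ : ℝ≥0 → ℝ≥0} (h : Monotone ρ) : Monotone (Ip ρ) :=
  fun a b hab => add_le_add hab (h hab)

lemma inv_mono {ρ ρinv : ℝ≥0 → ℝ≥0} (hs : StrictMono ρ)
    (hr : Function.RightInverse ρinv ρ) : Monotone ρinv := by
  intro a b hab
  have := hs.le_iff_le (a := ρinv a) (b := ρinv b)
  rw [hr a, hr b] at this
  exact this.mp hab

lemma weak_triangle {ρ ρinv : ℝ≥0 → ℝ≥0} (hs : StrictMono ρ)
    (hr : Function.RightInverse ρinv ρ) (a b : ℝ≥0) :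
    a + b ≤ max (Ip ρinv a) (Ip ρ b) := by
  rcases le_total b (ρinv a) with h | h
  · exact le_max_of_le_left (add_le_add_right h a)
  · refine le_max_of_le_right ?_
    have := hs.monotone h
    rw [hr a] at this
    calc a + b ≤ ρ b + b := add_le_add_left this b
      _ = Ip ρ b := by rw [Ip]; ring

theorem split_uniform_output_bound
    (γ₂ ρ₁ ρ₂ ρ₃ ρ₁inv ρ₂inv ρ₃inv : ℝ≥0 → ℝ≥0)
    (hγ₂ : ClassK γ₂)
    (hρ₁ : ClassKInf ρ₁) (hρ₂ : ClassKInf ρ₂) (hρ₃ : ClassKInf ρ₃)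
    (hρ₁invl : Function.LeftInverse ρ₁inv ρ₁)
    (hρ₁invr : Function.RightInverse ρ₁inv ρ₁)
    (hρ₂invl : Function.LeftInverse ρ₂inv ρ₂)
    (hρ₂invr : Function.RightInverse ρ₂inv ρ₂)
    (hρ₃invl : Function.LeftInverse ρ₃inv ρ₃)
    (hρ₃invr : Function.RightInverse ρ₃inv ρ₃)
    (b₁ b₂ v₁ v₂ d₁ d₂ d₃ : ℝ≥0) :
    Ip ρ₂inv (b₂ + d₃ + γ₂ (Ip ρ₁inv (b₁ + v₁ + d₁)) + v₂ + d₂) ≤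
      Ip ρ₂inv (Ip ρ₃inv (b₂ + γ₂ (Ip ρ₁inv (Ip ρ₃inv b₁)))) +
        Ip ρ₂inv (Ip ρ₃ (d₃ + γ₂ (Ip ρ₁inv (Ip ρ₃ (v₁ + d₁))) + v₂ + d₂)) := by
  have hγm : Monotone γ₂ := hγ₂.2.1.monotone
  have hρ₃s : StrictMono ρ₃ := hρ₃.1.2.1
  have hρ₃im : Monotone ρ₃inv := inv_mono hρ₃s hρ₃invr
  have hρ₁im : Monotone ρ₁inv := inv_mono hρ₁.1.2.1 hρ₁invr
  have hρ₂im : Monotone ρ₂inv := inv_mono hρ₂.1.2.1 hρ₂invr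
  set A := b₂ + γ₂ (Ip ρ₁inv (Ip ρ₃inv b₁))
  set B := d₃ + γ₂ (Ip ρ₁inv (Ip ρ₃ (v₁ + d₁))) + v₂ + d₂
  have h1 : b₁ + v₁ + d₁ ≤ max (Ip ρ₃inv b₁) (Ip ρ₃ (v₁ + d₁)) := by
    rw [add_assoc]; exact weak_triangle hρ₃s hρ₃invr b₁ (v₁ + d₁)
  have h2 : γ₂ (Ip ρ₁inv (b₁ + v₁ + d₁)) ≤
      max (γ₂ (Ip ρ₁inv (Ip ρ₃inv b₁))) (γ₂ (Ip ρ₁inv (Ip ρ₃ (v₁ + d₁)))) := by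
    rcases le_max_iff.mp h1 with h | h
    · exact le_max_of_le_left (hγm (Ip_mono hρ₁im h))
    · exact le_max_of_le_right (hγm (Ip_mono hρ₁im h))
  have h3 : b₂ + d₃ + γ₂ (Ip ρ₁inv (b₁ + v₁ + d₁)) + v₂ + d₂ ≤ A + B := by
    rcases le_max_iff.mp h2 with h | h
    · calc b₂ + d₃ + γ₂ (Ip ρ₁inv (b₁ + v₁ + d₁)) + v₂ + d₂
          ≤ b₂ + d₃ + γ₂ (Ip ρ₁inv (Ip ρ₃inv b₁)) + v₂ + d₂ := by
            gcongr
        _ ≤ A + B := by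
            have he : A + B = (b₂ + d₃ + γ₂ (Ip ρ₁inv (Ip ρ₃inv b₁)) + v₂ + d₂)
                + γ₂ (Ip ρ₁inv (Ip ρ₃ (v₁ + d₁))) := by simp only [A, B]; ring
            rw [he]; exact le_self_add
    · calc b₂ + d₃ + γ₂ (Ip ρ₁inv (b₁ + v₁ + d₁)) + v₂ + d₂
          ≤ b₂ + d₃ + γ₂ (Ip ρ₁inv (Ip ρ₃ (v₁ + d₁))) + v₂ + d₂ := by gcongr
        _ ≤ A + B := by
            have he : A + B = (b₂ + d₃ + γ₂ (Ip ρ₁inv (Ip ρ₃ (v₁ + d₁))) + v₂ + d₂)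
                + γ₂ (Ip ρ₁inv (Ip ρ₃inv b₁)) := by simp only [A, B]; ring
            rw [he]; exact le_self_add
  have h4 : A + B ≤ max (Ip ρ₃inv A) (Ip ρ₃ B) := weak_triangle hρ₃s hρ₃invr A B
  have h5 := (Ip_mono hρ₂im) (h3.trans h4)
  rcases le_max_iff.mp h4 with h | h
  · exact le_add_right ((Ip_mono hρ₂im (h3.trans h)))
  · exact le_add_left ((Ip_mono hρ₂im (h3.trans h)))
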